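/- Let β₁' > 0, β₂', β₀' ∈ ℝ, ρ ∈ ℝ, D > 0, and t_R: [0, D) → ℝ continuous. Define G(f) = ∫₀^f t_R(u) du + (1/β₁')[f(ln f − 1 + β₂'ρ − β₀') + (D − f)(ln(D − f) − 1)] for f ∈ (0, D). Then any stationary point f* of G satisfies f*/(D − f*) = exp(β₀' − β₁' t_R(f*) − β₂' ρ), i.e., the binary-logit ride-sourcing share condition. -/

import Mathlib

open Real Set intervalIntegral

/-- Stationary points of the riders' CDA objective
`G(f) = ∫₀^f t_R(u) du + (1/β₁')[f(ln f − 1 + β₂'ρ − β₀') + (D − f)(ln(D − f) − 1)]`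
on `(0, D)` satisfy the binary-logit share condition
`f*/(D − f*) = exp(β₀' − β₁' t_R(f*) − β₂' ρ)`. -/
theorem rider_cda_stationary_binary_logit
    (β₁' β₂' β₀' ρ D : ℝ) (hβ₁ : 0 < β₁') (hD : 0 < D)
    (tR : ℝ → ℝ) (htR : ContinuousOn tR (Ico 0 D))
    (G : ℝ → ℝ)
    (hG : ∀ f ∈ Ioo 0 D, G f = (∫ u in (0:ℝ)..f, tR u) +
      (1 / β₁') * (f * (Real.log f - 1 + β₂' * ρ - β₀')
        + (D - f) * (Real.log (D - f) - 1)))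
    (fstar : ℝ) (hfstar : fstar ∈ Ioo 0 D)
    (hstat : HasDerivAt G 0 fstar) :
    fstar / (D - fstar) = Real.exp (β₀' - β₁' * tR fstar - β₂' * ρ) := by
  obtain ⟨hf0, hfD⟩ := hfstar
  have hDf : 0 < D - fstar := by linarith
  set c : ℝ := β₂' * ρ - β₀' with hc
  set H : ℝ → ℝ := fun f => (∫ u in (0:ℝ)..f, tR u) +
      (1 / β₁') * (f * (Real.log f - 1 + c)
        + (D - f) * (Real.log (D - f) - 1)) with hH
  have htRIoo : ContinuousOn tR (Ioo 0 D) := htR.mono Ioo_subset_Ico_self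
  have hctsAt : ContinuousAt tR fstar :=
    htRIoo.continuousAt (isOpen_Ioo.mem_nhds ⟨hf0, hfD⟩)
  -- derivative of the integral term
  have hint : IntervalIntegrable tR MeasureTheory.volume 0 fstar := by
    apply ContinuousOn.intervalIntegrable
    apply htR.mono
    rw [uIcc_of_le hf0.le]
    exact fun x hx => ⟨hx.1, lt_of_le_of_lt hx.2 hfD⟩
  have hmeas : StronglyMeasurableAtFilter tR (nhds fstar) MeasureTheory.volume :=
    ContinuousOn.stronglyMeasurableAtFilter isOpen_Ioo htRIoo fstar ⟨hf0, hfD⟩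
  have h1 : HasDerivAt (fun f => ∫ u in (0:ℝ)..f, tR u) (tR fstar) fstar :=
    intervalIntegral.integral_hasDerivAt_right hint hmeas hctsAt
  -- derivative of f * (log f - 1 + c)
  have h2 : HasDerivAt (fun f : ℝ => f * (Real.log f - 1 + c))
      (Real.log fstar + c) fstar := by
    have : HasDerivAt (fun f : ℝ => f * (Real.log f - 1 + c)) _ fstar := (hasDerivAt_id' fstar).fun_mul
      (((Real.hasDerivAt_log hf0.ne').sub_const 1).add_const c)
    convert this using 1
    field_simp
    ring
  -- derivative of (D - f) * (log (D - f) - 1)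
  have h3 : HasDerivAt (fun f : ℝ => (D - f) * (Real.log (D - f) - 1))
      (-(Real.log (D - fstar))) fstar := by
    have hin : HasDerivAt (fun f : ℝ => D - f) (-1) fstar := by
      simpa using (hasDerivAt_id fstar).const_sub D
    have hout : HasDerivAt (fun y : ℝ => y * (Real.log y - 1))
        (Real.log (D - fstar)) (D - fstar) := by
      have : HasDerivAt (fun y : ℝ => y * (Real.log y - 1)) _ (D - fstar) := (hasDerivAt_id' (D - fstar)).fun_mul
        ((Real.hasDerivAt_log hDf.ne').sub_const 1)
      convert this using 1
      field_simp
      ring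
    have : HasDerivAt (fun f : ℝ => (D - f) * (Real.log (D - f) - 1)) _ fstar := hout.comp fstar hin
    convert this using 1
    ring
  have hHd : HasDerivAt H
      (tR fstar + (1 / β₁') * (Real.log fstar + c + -(Real.log (D - fstar)))) fstar :=
    h1.add (((h2.add h3)).const_mul (1 / β₁'))
  have heq : H =ᶠ[nhds fstar] G := by
    filter_upwards [isOpen_Ioo.mem_nhds (⟨hf0, hfD⟩ : fstar ∈ Ioo 0 D)] with x hx
    rw [hG x hx]
    simp only [hH, hc]
    ring
  have hGd : HasDerivAt G
      (tR fstar + (1 / β₁') * (Real.log fstar + c + -(Real.log (D - fstar)))) fstar :=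
    hHd.congr_of_eventuallyEq heq.symm
  have hzero : tR fstar + (1 / β₁') * (Real.log fstar + c + -(Real.log (D - fstar))) = 0 :=
    hGd.unique hstat
  have hlog : Real.log (fstar / (D - fstar)) = β₀' - β₁' * tR fstar - β₂' * ρ := by
    rw [Real.log_div hf0.ne' hDf.ne']
    have : Real.log fstar + c + -(Real.log (D - fstar)) = -(β₁' * tR fstar) := by
      have hne : β₁' ≠ 0 := hβ₁.ne'
      field_simp at hzero
      linarith
    simp only [hc] at this
    linarith
  rw [← hlog, Real.exp_log (div_pos hf0 hDf)]
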